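/- For coprime positive integers h and k, the Dedekind sums satisfy s(h,k) + s(k,h) = -1/4 + (1/12)(h/k + 1/(hk) + k/h). -/

import Mathlib

open Real

/-- The sawtooth (first Bernoulli) function `((x))`. -/
noncomputable def saw (x : ℝ) : ℝ := if Int.fract x = 0 then 0 else Int.fract x - 1/2

/-- The classical Dedekind sum `s(h,k)`. -/
noncomputable def dedekindSum (h k : ℕ) : ℝ :=
  ∑ n ∈ Finset.Ico 1 k, saw ((h * n : ℝ) / k) * saw ((n : ℝ) / k)

open Finset

private lemma modNeZero {h k : ℕ} (hco : Nat.Coprime h k) {n : ℕ} (h1 : 1 ≤ n) (h2 : n < k) :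
    h * n % k ≠ 0 := by
  intro hd
  have hdvd : k ∣ h * n := Nat.dvd_of_mod_eq_zero hd
  have hkn : k ∣ n := (Nat.Coprime.symm hco).dvd_of_dvd_mul_left hdvd
  have := Nat.le_of_dvd (by omega) hkn
  omega

private lemma permSum {h k : ℕ} (hco : Nat.Coprime h k) (g : ℕ → ℝ) :
    ∑ n ∈ Ico 1 k, g (h * n % k) = ∑ n ∈ Ico 1 k, g n := by
  rcases Nat.eq_zero_or_pos k with rfl | hk
  · simp
  have hmaps : ∀ a ∈ Ico 1 k, h * a % k ∈ Ico 1 k := by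
    intro a ha
    rw [mem_Ico] at ha ⊢
    have := modNeZero hco ha.1 ha.2
    have := Nat.mod_lt (h * a) hk
    omega
  have hinj : ∀ a₁ ∈ Ico 1 k, ∀ a₂ ∈ Ico 1 k, h * a₁ % k = h * a₂ % k → a₁ = a₂ := by
    intro a₁ h₁ a₂ h₂ he
    rw [mem_Ico] at h₁ h₂
    have hmod : a₁ ≡ a₂ [MOD k] := Nat.ModEq.cancel_left_of_coprime hco.symm he
    have e1 : a₁ % k = a₂ % k := hmod
    rw [Nat.mod_eq_of_lt h₁.2, Nat.mod_eq_of_lt h₂.2] at e1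
    exact e1
  exact Finset.sum_nbij (f := fun n => g (h * n % k)) (g := g) (fun n => h * n % k) hmaps
    (fun a ha b hb he => hinj a ha b hb he)
    (by
      intro b hb
      obtain ⟨a, ha, he⟩ := Finset.surj_on_of_inj_on_of_card_le (fun a _ => h * a % k)
        (fun a ha => hmaps a ha) (fun a₁ a₂ h₁ h₂ => hinj a₁ h₁ a₂ h₂) le_rfl b hb
      exact ⟨a, ha, he.symm⟩)
    (fun a _ => rfl)

private lemma filterEq {h k : ℕ} (hk : 0 < k) (hco : Nat.Coprime h k) {n : ℕ}
    (h1 : 1 ≤ n) (h2 : n < k) :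
    (Ico 1 h).filter (fun m => k * m < h * n) = Ico 1 (h * n / k + 1) := by
  have hne : h * n % k ≠ 0 := modNeZero hco h1 h2
  ext m
  simp only [mem_filter, mem_Ico]
  constructor
  · rintro ⟨⟨hm1, hmh⟩, hlt⟩
    refine ⟨hm1, Nat.lt_succ_of_le ?_⟩
    exact (Nat.le_div_iff_mul_le hk).2 (by rw [Nat.mul_comm]; omega)
  · rintro ⟨hm1, hm2⟩
    have hmle : m ≤ h * n / k := by omega
    have hmk : m * k ≤ h * n := (Nat.le_div_iff_mul_le hk).1 hmle
    have hne2 : k * m ≠ h * n := by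
      intro he
      exact hne (Nat.mod_eq_zero_of_dvd ⟨m, he.symm⟩)
    have hh : 0 < h := by
      rcases Nat.eq_zero_or_pos h with rfl | hh
      · simp at hmle; omega
      · exact hh
    have hdb : h * n / k < h := (Nat.div_lt_iff_lt_mul hk).2 (by
      calc h * n ≤ h * (k - 1) := Nat.mul_le_mul_left h (by omega)
      _ < h * k := by
          exact (Nat.mul_lt_mul_left hh).2 (by omega))
    constructor
    · exact ⟨hm1, by omega⟩
    · rw [Nat.mul_comm] at hmk; omega

private lemma gaussZ (d : ℕ) : 2 * ∑ m ∈ Ico 1 (d + 1), (m : ℤ) = d * (d + 1) := by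
  induction d with
  | zero => simp
  | succ n ih =>
    rw [Finset.sum_Ico_succ_top (by omega)]
    push_cast
    push_cast at ih
    linear_combination ih

private lemma sumIdR (k : ℕ) : ∑ n ∈ Ico 1 k, (n : ℝ) = k * (k - 1) / 2 := by
  induction k with
  | zero => simp
  | succ n ih =>
    rcases Nat.eq_zero_or_pos n with rfl | h1
    · simp
    rw [Finset.sum_Ico_succ_top (by omega : 1 ≤ n)]
    push_cast
    push_cast at ih
    linear_combination ih

private lemma sumSqR (k : ℕ) : ∑ n ∈ Ico 1 k, (n : ℝ) ^ 2 = k * (k - 1) * (2 * k - 1) / 6 := by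
  induction k with
  | zero => simp
  | succ n ih =>
    rcases Nat.eq_zero_or_pos n with rfl | h1
    · simp
    rw [Finset.sum_Ico_succ_top (by omega : 1 ≤ n)]
    push_cast
    push_cast at ih
    linear_combination ih

private lemma gaussZ2 (k : ℕ) : 2 * ∑ n ∈ Ico 1 k, (n : ℤ) = k * (k - 1) := by
  induction k with
  | zero => simp
  | succ n ih =>
    rcases Nat.eq_zero_or_pos n with rfl | h1
    · simp
    rw [Finset.sum_Ico_succ_top (by omega : 1 ≤ n)]
    push_cast
    push_cast at ih
    linear_combination ih

private lemma keyCount {h k : ℕ} (hh : 0 < h) (hk : 0 < k) (hco : Nat.Coprime h k) :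
    2 * ∑ m ∈ Ico 1 h, (m : ℤ) * ((k * m / h : ℕ) : ℤ) +
      ∑ n ∈ Ico 1 k, ((h * n / k : ℕ) : ℤ) * (((h * n / k : ℕ) : ℤ) + 1) =
      (h : ℤ) * ((h : ℤ) - 1) * ((k : ℤ) - 1) := by
  classical
  set R : Finset (ℕ × ℕ) := (Ico 1 k) ×ˢ (Ico 1 h) with hR
  set c : ℕ × ℕ → Prop := fun x => k * x.2 < h * x.1 with hc
  -- no pair on the diagonal
  have hneR : ∀ x ∈ R, h * x.1 ≠ k * x.2 := by
    intro x hx he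
    rw [hR, mem_product, mem_Ico, mem_Ico] at hx
    exact modNeZero hco hx.1.1 hx.1.2 (Nat.mod_eq_zero_of_dvd ⟨x.2, he⟩)
  have hflip : R.filter (fun x => ¬ c x) = R.filter (fun x => h * x.1 < k * x.2) := by
    apply Finset.filter_congr
    intro x hx
    simp only [hc, not_lt]
    constructor
    · intro hle; exact lt_of_le_of_ne hle (hneR x hx)
    · exact le_of_lt
  -- generic reduction of filtered double sums to Ico sums (k-side)
  have hsum1 : ∀ v : ℕ → ℕ → ℤ, ∑ x ∈ R.filter c, v x.1 x.2
      = ∑ n ∈ Ico 1 k, ∑ m ∈ Ico 1 (h * n / k + 1), v n m := by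
    intro v
    rw [Finset.sum_filter, hR, Finset.sum_product]
    refine Finset.sum_congr rfl (fun n hn => ?_)
    rw [mem_Ico] at hn
    rw [← Finset.sum_filter, filterEq hk hco hn.1 hn.2]
  -- h-side
  have hsum2 : ∀ v : ℕ → ℕ → ℤ, ∑ x ∈ R.filter (fun x => h * x.1 < k * x.2), v x.1 x.2
      = ∑ m ∈ Ico 1 h, ∑ n ∈ Ico 1 (k * m / h + 1), v n m := by
    intro v
    rw [Finset.sum_filter, hR, Finset.sum_product_right]
    refine Finset.sum_congr rfl (fun m hm => ?_)
    rw [mem_Ico] at hm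
    rw [← Finset.sum_filter, filterEq hh hco.symm hm.1 hm.2]
  -- involution
  have ePP : ∑ x ∈ R.filter (fun x => ¬ c x), ((k : ℤ) * x.2 - h * x.1)
      = ∑ x ∈ R.filter c, ((h : ℤ) * x.1 - k * x.2) := by
    rw [hflip]
    refine Finset.sum_nbij' (i := fun x : ℕ × ℕ => (k - x.1, h - x.2))
      (j := fun x : ℕ × ℕ => (k - x.1, h - x.2)) ?_ ?_ ?_ ?_ ?_
    · intro a ha
      simp only [hc, mem_filter, hR, mem_product, mem_Ico] at ha ⊢
      obtain ⟨⟨⟨ha1, ha2⟩, ⟨hb1, hb2⟩⟩, hlt⟩ := ha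
      refine ⟨⟨⟨by omega, by omega⟩, ⟨by omega, by omega⟩⟩, ?_⟩
      have hz : ((k : ℤ) * (h - a.2 : ℕ) < (h : ℤ) * (k - a.1 : ℕ)) → k * (h - a.2) < h * (k - a.1) := by
        intro hzz
        exact_mod_cast hzz
      apply hz
      have c1 : ((h - a.2 : ℕ) : ℤ) = (h : ℤ) - a.2 := by omega
      have c2 : ((k - a.1 : ℕ) : ℤ) = (k : ℤ) - a.1 := by omega
      rw [c1, c2]
      have hlt' : (h : ℤ) * a.1 < (k : ℤ) * a.2 := by exact_mod_cast hlt
      nlinarith [hlt']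
    · intro a ha
      simp only [hc, mem_filter, hR, mem_product, mem_Ico] at ha ⊢
      obtain ⟨⟨⟨ha1, ha2⟩, ⟨hb1, hb2⟩⟩, hlt⟩ := ha
      refine ⟨⟨⟨by omega, by omega⟩, ⟨by omega, by omega⟩⟩, ?_⟩
      have hz : ((h : ℤ) * (k - a.1 : ℕ) < (k : ℤ) * (h - a.2 : ℕ)) → h * (k - a.1) < k * (h - a.2) := by
        intro hzz
        exact_mod_cast hzz
      apply hz
      have c1 : ((h - a.2 : ℕ) : ℤ) = (h : ℤ) - a.2 := by omega
      have c2 : ((k - a.1 : ℕ) : ℤ) = (k : ℤ) - a.1 := by omega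
      rw [c1, c2]
      have hlt' : (k : ℤ) * a.2 < (h : ℤ) * a.1 := by exact_mod_cast hlt
      nlinarith [hlt']
    · intro a ha
      simp only [hc, mem_filter, hR, mem_product, mem_Ico] at ha
      obtain ⟨⟨⟨ha1, ha2⟩, ⟨hb1, hb2⟩⟩, hlt⟩ := ha
      simp only [Prod.ext_iff]
      constructor <;> omega
    · intro a ha
      simp only [hc, mem_filter, hR, mem_product, mem_Ico] at ha
      obtain ⟨⟨⟨ha1, ha2⟩, ⟨hb1, hb2⟩⟩, hlt⟩ := ha
      simp only [Prod.ext_iff]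
      constructor <;> omega
    · intro a ha
      simp only [hc, mem_filter, hR, mem_product, mem_Ico] at ha
      obtain ⟨⟨⟨ha1, ha2⟩, ⟨hb1, hb2⟩⟩, hlt⟩ := ha
      have c1 : ((h - a.2 : ℕ) : ℤ) = (h : ℤ) - a.2 := by omega
      have c2 : ((k - a.1 : ℕ) : ℤ) = (k : ℤ) - a.1 := by omega
      simp only [c1, c2]
      ring
  -- X : sum of h*x.1 over filter c
  have eX : ∑ x ∈ R.filter c, ((h : ℤ) * x.1)
      = ∑ n ∈ Ico 1 k, (h : ℤ) * n * ((h * n / k : ℕ) : ℤ) := by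
    rw [hsum1 (fun n m => (h : ℤ) * n)]
    refine Finset.sum_congr rfl (fun n hn => ?_)
    rw [Finset.sum_const, Nat.card_Ico, Nat.add_sub_cancel, nsmul_eq_mul]
    ring
  have e2P : 2 * ∑ x ∈ R.filter c, ((h : ℤ) * x.1 - k * x.2)
      = ∑ n ∈ Ico 1 k, (2 * (h : ℤ) * n * ((h * n / k : ℕ) : ℤ)
          - k * (((h * n / k : ℕ) : ℤ) * (((h * n / k : ℕ) : ℤ) + 1))) := by
    rw [hsum1 (fun n m => (h : ℤ) * n - k * m), Finset.mul_sum]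
    refine Finset.sum_congr rfl (fun n hn => ?_)
    rw [Finset.sum_sub_distrib, Finset.sum_const, Nat.card_Ico, Nat.add_sub_cancel,
      nsmul_eq_mul, ← Finset.mul_sum]
    have hg := gaussZ (h * n / k)
    push_cast at hg ⊢
    linear_combination (-(k : ℤ)) * hg
  have eSplit2 : ∑ n ∈ Ico 1 k, (2 * (h : ℤ) * n * ((h * n / k : ℕ) : ℤ)
          - k * (((h * n / k : ℕ) : ℤ) * (((h * n / k : ℕ) : ℤ) + 1)))
      = 2 * ∑ n ∈ Ico 1 k, (h : ℤ) * n * ((h * n / k : ℕ) : ℤ)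
        - k * ∑ n ∈ Ico 1 k, ((h * n / k : ℕ) : ℤ) * (((h * n / k : ℕ) : ℤ) + 1) := by
    rw [Finset.sum_sub_distrib,
      Finset.mul_sum (Ico 1 k) (fun n => ((h * n / k : ℕ) : ℤ) * (((h * n / k : ℕ) : ℤ) + 1)) (k : ℤ),
      Finset.mul_sum (Ico 1 k) (fun n => (h : ℤ) * n * ((h * n / k : ℕ) : ℤ)) (2 : ℤ)]
    congr 1
    exact Finset.sum_congr rfl (fun n _ => by ring)
  have E2 : 2 * ∑ x ∈ R.filter c, ((h : ℤ) * x.1 - k * x.2)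
      = 2 * ∑ x ∈ R.filter c, ((h : ℤ) * x.1)
        - k * ∑ n ∈ Ico 1 k, ((h * n / k : ℕ) : ℤ) * (((h * n / k : ℕ) : ℤ) + 1) := by
    rw [e2P, eSplit2, ← eX]
  have E4 : ∑ x ∈ R.filter (fun x => ¬ c x), ((k : ℤ) * x.2)
      = k * ∑ m ∈ Ico 1 h, (m : ℤ) * ((k * m / h : ℕ) : ℤ) := by
    rw [hflip, hsum2 (fun n m => (k : ℤ) * m), Finset.mul_sum]
    refine Finset.sum_congr rfl (fun m hm => ?_)
    rw [Finset.sum_const, Nat.card_Ico, Nat.add_sub_cancel, nsmul_eq_mul]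
    ring
  have E3 : ∑ x ∈ R.filter (fun x => ¬ c x), ((k : ℤ) * x.2 - h * x.1)
      = ∑ x ∈ R.filter (fun x => ¬ c x), ((k : ℤ) * x.2)
        - ∑ x ∈ R.filter (fun x => ¬ c x), ((h : ℤ) * x.1) :=
    Finset.sum_sub_distrib _ _
  have E5 : ∑ x ∈ R.filter c, ((h : ℤ) * x.1)
      + ∑ x ∈ R.filter (fun x => ¬ c x), ((h : ℤ) * x.1)
      = ∑ x ∈ R, ((h : ℤ) * x.1) :=
    Finset.sum_filter_add_sum_filter_not R c _
  have E6 : ∑ x ∈ R, ((h : ℤ) * x.1)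
      = (h : ℤ) * ((h : ℤ) - 1) * ∑ n ∈ Ico 1 k, (n : ℤ) := by
    rw [hR, Finset.sum_product]
    have hcongr : ∀ n ∈ Ico 1 k, ∑ _m ∈ Ico 1 h, ((h : ℤ) * n)
        = (h : ℤ) * ((h : ℤ) - 1) * n := by
      intro n hn
      rw [Finset.sum_const, Nat.card_Ico, nsmul_eq_mul]
      have hc : ((h - 1 : ℕ) : ℤ) = (h : ℤ) - 1 := by omega
      rw [hc]; ring
    rw [Finset.sum_congr rfl hcongr, ← Finset.mul_sum]
  have E7 : 2 * ∑ n ∈ Ico 1 k, (n : ℤ) = (k : ℤ) * ((k : ℤ) - 1) := gaussZ2 k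
  have key : (k : ℤ) * (2 * ∑ m ∈ Ico 1 h, (m : ℤ) * ((k * m / h : ℕ) : ℤ) +
      ∑ n ∈ Ico 1 k, ((h * n / k : ℕ) : ℤ) * (((h * n / k : ℕ) : ℤ) + 1))
      = (k : ℤ) * ((h : ℤ) * ((h : ℤ) - 1) * ((k : ℤ) - 1)) := by
    linear_combination 2 * ePP + E2 - 2 * E3 - 2 * E4 + 2 * E5 + 2 * E6
      + ((h : ℤ) ^ 2 - h) * E7
  exact mul_left_cancel₀ (by exact_mod_cast hk.ne' : (k : ℤ) ≠ 0) key

private lemma sawNatCast {a k : ℕ} (hk : 0 < k) (hne : a % k ≠ 0) :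
    saw ((a : ℝ) / k) = ((a % k : ℕ) : ℝ) / k - 1/2 := by
  rw [saw, Int.fract_div_natCast_eq_div_natCast_mod, if_neg]
  exact div_ne_zero (Nat.cast_ne_zero.2 hne) (Nat.cast_ne_zero.2 hk.ne')

private lemma dedekindEq {h k : ℕ} (hk : 0 < k) (hco : Nat.Coprime h k) :
    4 * (k : ℝ)^2 * dedekindSum h k
      = 4 * (∑ n ∈ Ico 1 k, ((h * n % k : ℕ) : ℝ) * (n : ℝ)) - (k : ℝ)^2 * ((k : ℝ) - 1) := by
  have hk0 : (k : ℝ) ≠ 0 := Nat.cast_ne_zero.2 hk.ne'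
  have hterm : ∀ n ∈ Ico 1 k, saw ((h * n : ℝ) / k) * saw ((n : ℝ) / k)
      = (((h * n % k : ℕ) : ℝ) / k - 1/2) * ((n : ℝ) / k - 1/2) := by
    intro n hn
    rw [mem_Ico] at hn
    have e1 : ((h : ℝ) * (n : ℝ)) = ((h * n : ℕ) : ℝ) := by push_cast; ring
    have e2 : saw ((n : ℝ) / k) = ((n % k : ℕ) : ℝ) / k - 1/2 :=
      sawNatCast hk (by rw [Nat.mod_eq_of_lt hn.2]; omega)
    rw [e1, sawNatCast hk (modNeZero hco hn.1 hn.2), e2, Nat.mod_eq_of_lt hn.2]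
  have hP1 : ∑ n ∈ Ico 1 k, ((h * n % k : ℕ) : ℝ) = ∑ n ∈ Ico 1 k, (n : ℝ) :=
    permSum hco (fun a => (a : ℝ))
  have hIK := sumIdR k
  have hc : ((k - 1 : ℕ) : ℝ) = (k : ℝ) - 1 := by
    rw [Nat.cast_sub hk]; norm_num
  calc 4 * (k : ℝ)^2 * dedekindSum h k
      = 4 * (k : ℝ)^2 * ∑ n ∈ Ico 1 k,
          ((((h * n % k : ℕ) : ℝ)) / k - 1/2) * ((n : ℝ) / k - 1/2) := by
        unfold dedekindSum
        rw [Finset.sum_congr rfl hterm]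
    _ = ∑ n ∈ Ico 1 k, (4 * (((h * n % k : ℕ) : ℝ) * (n : ℝ)) - 2 * (k : ℝ) * (n : ℝ)
          - 2 * (k : ℝ) * ((h * n % k : ℕ) : ℝ) + (k : ℝ)^2) := by
        rw [Finset.mul_sum]
        refine Finset.sum_congr rfl (fun n hn => ?_)
        field_simp
        ring
    _ = 4 * ∑ n ∈ Ico 1 k, ((h * n % k : ℕ) : ℝ) * (n : ℝ)
          - 2 * (k : ℝ) * ∑ n ∈ Ico 1 k, (n : ℝ)
          - 2 * (k : ℝ) * ∑ n ∈ Ico 1 k, ((h * n % k : ℕ) : ℝ)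
          + (k - 1 : ℕ) * (k : ℝ)^2 := by
        rw [Finset.sum_add_distrib, Finset.sum_sub_distrib, Finset.sum_sub_distrib,
          ← Finset.mul_sum (Ico 1 k) (fun n => ((h * n % k : ℕ) : ℝ) * (n : ℝ)) (4 : ℝ),
          ← Finset.mul_sum (Ico 1 k) (fun n => (n : ℝ)) (2 * (k : ℝ)),
          ← Finset.mul_sum (Ico 1 k) (fun n => ((h * n % k : ℕ) : ℝ)) (2 * (k : ℝ)),
          Finset.sum_const, Nat.card_Ico, nsmul_eq_mul]
    _ = 4 * (∑ n ∈ Ico 1 k, ((h * n % k : ℕ) : ℝ) * (n : ℝ)) - (k : ℝ)^2 * ((k : ℝ) - 1) := by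
        rw [hc, hP1, hIK]
        ring

private lemma divCast {h k n : ℕ} :
    (k : ℝ) * ((h * n / k : ℕ) : ℝ) = (h : ℝ) * n - ((h * n % k : ℕ) : ℝ) := by
  have := Nat.div_add_mod (h * n) k
  have hc : (k : ℝ) * ((h * n / k : ℕ) : ℝ) + ((h * n % k : ℕ) : ℝ) = (h : ℝ) * n := by
    exact_mod_cast this
  linarith

theorem dedekind_reciprocity (h k : ℕ) (hh : 0 < h) (hk : 0 < k) (hco : Nat.Coprime h k) :
    dedekindSum h k + dedekindSum k h =
      -1/4 + (1/12) * ((h : ℝ)/k + 1/(h*k) + (k : ℝ)/h) := by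
  have hk0 : (k : ℝ) ≠ 0 := Nat.cast_ne_zero.2 hk.ne'
  have hh0 : (h : ℝ) ≠ 0 := Nat.cast_ne_zero.2 hh.ne'
  have c1 := dedekindEq hk hco
  have c2 := dedekindEq hh hco.symm
  -- the key counting identity, cast to ℝ
  have KR : 2 * ∑ m ∈ Ico 1 h, (m : ℝ) * ((k * m / h : ℕ) : ℝ) +
      ∑ n ∈ Ico 1 k, ((h * n / k : ℕ) : ℝ) * (((h * n / k : ℕ) : ℝ) + 1)
      = (h : ℝ) * ((h : ℝ) - 1) * ((k : ℝ) - 1) := by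
    have h2 := keyCount hh hk hco
    have h3 : ((2 * ∑ m ∈ Ico 1 h, (m : ℤ) * ((k * m / h : ℕ) : ℤ) +
        ∑ n ∈ Ico 1 k, ((h * n / k : ℕ) : ℤ) * (((h * n / k : ℕ) : ℤ) + 1) : ℤ) : ℝ)
        = (((h : ℤ) * ((h : ℤ) - 1) * ((k : ℤ) - 1) : ℤ) : ℝ) := by rw [h2]
    push_cast at h3
    exact h3
  have T1 : (h : ℝ) * ∑ m ∈ Ico 1 h, (m : ℝ) * ((k * m / h : ℕ) : ℝ)
      = (k : ℝ) * ∑ m ∈ Ico 1 h, (m : ℝ)^2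
        - ∑ m ∈ Ico 1 h, ((k * m % h : ℕ) : ℝ) * (m : ℝ) := by
    rw [Finset.mul_sum,
      Finset.mul_sum (Ico 1 h) (fun m => (m : ℝ)^2) (k : ℝ), ← Finset.sum_sub_distrib]
    refine Finset.sum_congr rfl (fun m hm => ?_)
    have hd := divCast (h := k) (k := h) (n := m)
    linear_combination (m : ℝ) * hd
  have T2 : (k : ℝ)^2 * ∑ n ∈ Ico 1 k, ((h * n / k : ℕ) : ℝ) * (((h * n / k : ℕ) : ℝ) + 1)
      = ((h : ℝ)^2 + 1) * ∑ n ∈ Ico 1 k, (n : ℝ)^2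
        - 2 * (h : ℝ) * ∑ n ∈ Ico 1 k, ((h * n % k : ℕ) : ℝ) * (n : ℝ)
        + (k : ℝ) * ((h : ℝ) - 1) * ∑ n ∈ Ico 1 k, (n : ℝ) := by
    have hP1 : ∑ n ∈ Ico 1 k, ((h * n % k : ℕ) : ℝ) = ∑ n ∈ Ico 1 k, (n : ℝ) :=
      permSum hco (fun a => (a : ℝ))
    have hP2 : ∑ n ∈ Ico 1 k, ((h * n % k : ℕ) : ℝ)^2 = ∑ n ∈ Ico 1 k, (n : ℝ)^2 :=
      permSum hco (fun a => (a : ℝ)^2)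
    calc (k : ℝ)^2 * ∑ n ∈ Ico 1 k, ((h * n / k : ℕ) : ℝ) * (((h * n / k : ℕ) : ℝ) + 1)
        = ∑ n ∈ Ico 1 k, ((h : ℝ)^2 * (n : ℝ)^2
            - 2 * (h : ℝ) * (((h * n % k : ℕ) : ℝ) * (n : ℝ))
            + ((h * n % k : ℕ) : ℝ)^2
            + (k : ℝ) * (h : ℝ) * (n : ℝ)
            - (k : ℝ) * ((h * n % k : ℕ) : ℝ)) := by
          rw [Finset.mul_sum]
          refine Finset.sum_congr rfl (fun n hn => ?_)
          have hd := divCast (h := h) (k := k) (n := n)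
          linear_combination ((k : ℝ) * ((h * n / k : ℕ) : ℝ) + (h : ℝ) * n
            - ((h * n % k : ℕ) : ℝ) + k) * hd
      _ = (h : ℝ)^2 * ∑ n ∈ Ico 1 k, (n : ℝ)^2
            - 2 * (h : ℝ) * ∑ n ∈ Ico 1 k, ((h * n % k : ℕ) : ℝ) * (n : ℝ)
            + ∑ n ∈ Ico 1 k, ((h * n % k : ℕ) : ℝ)^2
            + (k : ℝ) * (h : ℝ) * ∑ n ∈ Ico 1 k, (n : ℝ)
            - (k : ℝ) * ∑ n ∈ Ico 1 k, ((h * n % k : ℕ) : ℝ) := by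
          rw [Finset.sum_sub_distrib, Finset.sum_add_distrib, Finset.sum_add_distrib,
            Finset.sum_sub_distrib,
            ← Finset.mul_sum (Ico 1 k) (fun n => (n : ℝ)^2) ((h : ℝ)^2),
            ← Finset.mul_sum (Ico 1 k) (fun n => ((h * n % k : ℕ) : ℝ) * (n : ℝ)) (2 * (h : ℝ)),
            ← Finset.mul_sum (Ico 1 k) (fun n => (n : ℝ)) ((k : ℝ) * (h : ℝ)),
            ← Finset.mul_sum (Ico 1 k) (fun n => ((h * n % k : ℕ) : ℝ)) (k : ℝ)]
      _ = ((h : ℝ)^2 + 1) * ∑ n ∈ Ico 1 k, (n : ℝ)^2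
            - 2 * (h : ℝ) * ∑ n ∈ Ico 1 k, ((h * n % k : ℕ) : ℝ) * (n : ℝ)
            + (k : ℝ) * ((h : ℝ) - 1) * ∑ n ∈ Ico 1 k, (n : ℝ) := by
          rw [hP1, hP2]
          ring
  have V1 := sumIdR k
  have V2 := sumSqR k
  have V3 := sumSqR h
  have hne4 : (4 * (h : ℝ)^2 * (k : ℝ)^2) ≠ 0 := by positivity
  have rhs_eq : 4 * (h : ℝ)^2 * (k : ℝ)^2 *
      (-1/4 + (1/12) * ((h : ℝ)/k + 1/(h*k) + (k : ℝ)/h))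
      = -(h : ℝ)^2 * (k : ℝ)^2 + ((h : ℝ)^3 * k + (h : ℝ) * k + (h : ℝ) * (k : ℝ)^3)/3 := by
    field_simp
    ring
  apply mul_left_cancel₀ hne4
  rw [rhs_eq]
  linear_combination (h : ℝ)^2 * c1 + (k : ℝ)^2 * c2 - 2 * (h : ℝ) * (k : ℝ)^2 * KR
    + 4 * (k : ℝ)^2 * T1 + 2 * (h : ℝ) * T2 + 2 * (h : ℝ) * (k : ℝ) * ((h : ℝ) - 1) * V1
    + 2 * (h : ℝ) * ((h : ℝ)^2 + 1) * V2 + 4 * (k : ℝ)^3 * V3
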